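/- Let R ⊆ S_n be a top-k partial ranking, let σ be uniformly distributed on R, let σ_0 ∈ R be fixed, and set X = d(σ, σ_0) and Y = d(A_R(σ), σ_0). Then for every monotone increasing function h : ℝ → ℝ, the random variables h(X) and h(Y) have non-positive covariance: Cov(h(X), h(Y)) ≤ 0. -/

import Mathlib

/-- The Kendall (tau) distance between two permutations of `Fin n`:
the number of pairs `(x, y)` with `x < y` on which `σ⁻¹` and `τ⁻¹`
disagree in relative order. -/
def kendallDist {n : ℕ} (σ τ : Equiv.Perm (Fin n)) : ℕ :=
  (Finset.univ.filter (fun p : Fin n × Fin n =>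
    p.1 < p.2 ∧ ¬((σ⁻¹ p.1 < σ⁻¹ p.2) ↔ (τ⁻¹ p.1 < τ⁻¹ p.2)))).card

/-- The top-`k` partial ranking determined by the items `a 0, …, a (k-1)`:
the set of full rankings (permutations) `σ` with `σ i = a i` for the first
`k` positions. -/
def topkFinset {n k : ℕ} (hk : k ≤ n) (a : Fin k → Fin n) :
    Finset (Equiv.Perm (Fin n)) :=
  Finset.univ.filter fun σ => ∀ i : Fin k, σ (Fin.castLE hk i) = a i

/-- The permutation of `Fin n` fixing the first `k` positions and reversing
the order of the remaining `n - k` positions. -/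
def revAfter (n k : ℕ) : Equiv.Perm (Fin n) :=
  Function.Involutive.toPerm
    (fun p => if _h : (p : ℕ) < k then p
      else ⟨n + k - 1 - (p : ℕ), by have := p.isLt; omega⟩)
    (by
      intro p
      have hp := p.isLt
      by_cases h : (p : ℕ) < k
      · simp [h]
      · have h2 : ¬ (n + k - 1 - (p : ℕ) < k) := by omega
        simp only [dif_neg h, dif_neg h2]
        ext
        simp
        omega)

/-- The antithetic permutation of `σ` relative to a top-`k` partial ranking:
the first `k` positions are unchanged and the remaining positions are
reversed, i.e. `A σ (k+j) = σ (n+1-j)` (in 1-indexed notation). -/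
def antithetic (n k : ℕ) (σ : Equiv.Perm (Fin n)) : Equiv.Perm (Fin n) :=
  σ * revAfter n k

lemma revAfter_inv (n k : ℕ) : (revAfter n k)⁻¹ = revAfter n k := by
  ext p
  simp [revAfter, Equiv.Perm.inv_def, Function.Involutive.toPerm]

lemma antithetic_inv_apply (n k : ℕ) (σ : Equiv.Perm (Fin n)) (x : Fin n) :
    (antithetic n k σ)⁻¹ x = revAfter n k (σ⁻¹ x) := by
  rw [antithetic, mul_inv_rev, revAfter_inv]
  rfl

lemma revAfter_val (n k : ℕ) (q : Fin n) :
    ((revAfter n k q : Fin n) : ℕ) = if (q : ℕ) < k then (q : ℕ) else n + k - 1 - (q : ℕ) := by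
  show ((if _h : (q : ℕ) < k then q
      else (⟨n + k - 1 - (q : ℕ), by have := q.isLt; omega⟩ : Fin n) : Fin n) : ℕ) = _
  split_ifs <;> simp

lemma mem_topk_inv {n k : ℕ} (hk : k ≤ n) {a : Fin k → Fin n} {τ : Equiv.Perm (Fin n)}
    (hτ : τ ∈ topkFinset hk a) (i : Fin k) : τ⁻¹ (a i) = Fin.castLE hk i := by
  have := (Finset.mem_filter.mp hτ).2 i
  rw [← this, Equiv.Perm.inv_def, Equiv.symm_apply_apply]

lemma inv_lt_iff {n k : ℕ} (hk : k ≤ n) {a : Fin k → Fin n} {τ : Equiv.Perm (Fin n)}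
    (hτ : τ ∈ topkFinset hk a) (x : Fin n) :
    ((τ⁻¹ x : Fin n) : ℕ) < k ↔ ∃ i, a i = x := by
  constructor
  · intro hlt
    refine ⟨⟨((τ⁻¹ x : Fin n) : ℕ), hlt⟩, ?_⟩
    have := (Finset.mem_filter.mp hτ).2 ⟨((τ⁻¹ x : Fin n) : ℕ), hlt⟩
    rw [← this]
    congr 1
    ext
    simp [Fin.castLE]
  · rintro ⟨i, rfl⟩
    rw [mem_topk_inv hk hτ i]
    exact i.isLt

set_option maxHeartbeats 1000000 in
lemma pair_eq {n k : ℕ} (hk : k ≤ n) (a : Fin k → Fin n)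
    (σ σ₀ : Equiv.Perm (Fin n)) (hσ : σ ∈ topkFinset hk a) (hσ₀ : σ₀ ∈ topkFinset hk a)
    (x y : Fin n) :
    ((if x < y ∧ ¬((σ⁻¹ x < σ⁻¹ y) ↔ (σ₀⁻¹ x < σ₀⁻¹ y)) then 1 else 0) : ℕ)
      + (if x < y ∧ ¬(((antithetic n k σ)⁻¹ x < (antithetic n k σ)⁻¹ y)
            ↔ (σ₀⁻¹ x < σ₀⁻¹ y)) then 1 else 0)
      = if x < y ∧ (¬∃ i, a i = x) ∧ (¬∃ i, a i = y) then 1 else 0 := by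
  by_cases hxy : x < y
  swap
  · simp [hxy]
  have hne : x ≠ y := ne_of_lt hxy
  have h1 : ((σ⁻¹ x : Fin n) : ℕ) ≠ ((σ⁻¹ y : Fin n) : ℕ) := by
    intro hE
    exact hne (by simpa using congrArg σ (Fin.ext hE))
  have h0 : ((σ₀⁻¹ x : Fin n) : ℕ) ≠ ((σ₀⁻¹ y : Fin n) : ℕ) := by
    intro hE
    exact hne (by simpa using congrArg σ₀ (Fin.ext hE))
  have hun : ((σ⁻¹ x : Fin n) : ℕ) < n := (σ⁻¹ x).isLt
  have hvn : ((σ⁻¹ y : Fin n) : ℕ) < n := (σ⁻¹ y).isLt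
  have h0un : ((σ₀⁻¹ x : Fin n) : ℕ) < n := (σ₀⁻¹ x).isLt
  have h0vn : ((σ₀⁻¹ y : Fin n) : ℕ) < n := (σ₀⁻¹ y).isLt
  rw [antithetic_inv_apply, antithetic_inv_apply]
  simp only [Fin.lt_def, revAfter_val]
  have ex : (∃ i, a i = x) = (((σ₀⁻¹ x : Fin n) : ℕ) < k) :=
    propext (inv_lt_iff hk hσ₀ x).symm
  have ey : (∃ i, a i = y) = (((σ₀⁻¹ y : Fin n) : ℕ) < k) :=
    propext (inv_lt_iff hk hσ₀ y).symm
  simp only [ex, ey]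
  by_cases hx : ((σ₀⁻¹ x : Fin n) : ℕ) < k <;> by_cases hy : ((σ₀⁻¹ y : Fin n) : ℕ) < k
  · have hux : ((σ⁻¹ x : Fin n) : ℕ) < k :=
      (inv_lt_iff hk hσ x).mpr ((inv_lt_iff hk hσ₀ x).mp hx)
    have huy : ((σ⁻¹ y : Fin n) : ℕ) < k :=
      (inv_lt_iff hk hσ y).mpr ((inv_lt_iff hk hσ₀ y).mp hy)
    obtain ⟨i, rfl⟩ := (inv_lt_iff hk hσ₀ x).mp hx
    obtain ⟨j, rfl⟩ := (inv_lt_iff hk hσ₀ y).mp hy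
    have e1 : ((σ⁻¹ (a i) : Fin n) : ℕ) = ((σ₀⁻¹ (a i) : Fin n) : ℕ) := by
      rw [mem_topk_inv hk hσ i, mem_topk_inv hk hσ₀ i]
    have e2 : ((σ⁻¹ (a j) : Fin n) : ℕ) = ((σ₀⁻¹ (a j) : Fin n) : ℕ) := by
      rw [mem_topk_inv hk hσ j, mem_topk_inv hk hσ₀ j]
    split_ifs <;> omega
  · have hux : ((σ⁻¹ x : Fin n) : ℕ) < k :=
      (inv_lt_iff hk hσ x).mpr ((inv_lt_iff hk hσ₀ x).mp hx)
    have huy : ¬ ((σ⁻¹ y : Fin n) : ℕ) < k :=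
      fun hc => hy ((inv_lt_iff hk hσ₀ y).mpr ((inv_lt_iff hk hσ y).mp hc))
    split_ifs <;> omega
  · have hux : ¬ ((σ⁻¹ x : Fin n) : ℕ) < k :=
      fun hc => hx ((inv_lt_iff hk hσ₀ x).mpr ((inv_lt_iff hk hσ x).mp hc))
    have huy : ((σ⁻¹ y : Fin n) : ℕ) < k :=
      (inv_lt_iff hk hσ y).mpr ((inv_lt_iff hk hσ₀ y).mp hy)
    split_ifs <;> omega
  · have hux : ¬ ((σ⁻¹ x : Fin n) : ℕ) < k :=
      fun hc => hx ((inv_lt_iff hk hσ₀ x).mpr ((inv_lt_iff hk hσ x).mp hc))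
    have huy : ¬ ((σ⁻¹ y : Fin n) : ℕ) < k :=
      fun hc => hy ((inv_lt_iff hk hσ₀ y).mpr ((inv_lt_iff hk hσ y).mp hc))
    split_ifs <;> omega

open Classical in
lemma key_sum {n k : ℕ} (hk : k ≤ n) (a : Fin k → Fin n)
    (σ σ₀ : Equiv.Perm (Fin n)) (hσ : σ ∈ topkFinset hk a) (hσ₀ : σ₀ ∈ topkFinset hk a) :
    kendallDist σ σ₀ + kendallDist (antithetic n k σ) σ₀ =
      (Finset.univ.filter (fun p : Fin n × Fin n =>
        p.1 < p.2 ∧ (¬∃ i, a i = p.1) ∧ (¬∃ i, a i = p.2))).card := by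
  classical
  unfold kendallDist
  rw [Finset.card_filter, Finset.card_filter, Finset.card_filter, ← Finset.sum_add_distrib]
  refine Finset.sum_congr rfl fun p _ => ?_
  exact pair_eq hk a σ σ₀ hσ hσ₀ p.1 p.2

/-- Let `R` be a top-`k` partial ranking, let `σ` be uniform on `R`, let
`σ₀ ∈ R`, and set `X = d(σ, σ₀)`, `Y = d(A_R(σ), σ₀)`. For every monotone
increasing `h : ℝ → ℝ`, the random variables `h(X)` and `h(Y)` have
non-positive covariance, expectations being taken with respect to the uniform
distribution on `R`. -/
theorem antithetic_monotone_nonpos_cov {n k : ℕ} (hk : k ≤ n)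
    (a : Fin k → Fin n) (ha : Function.Injective a)
    (σ₀ : Equiv.Perm (Fin n)) (hσ₀ : σ₀ ∈ topkFinset hk a)
    (h : ℝ → ℝ) (hmono : Monotone h) :
    let R := topkFinset hk a
    let E : (Equiv.Perm (Fin n) → ℝ) → ℝ := fun f => (∑ σ ∈ R, f σ) / R.card
    let X : Equiv.Perm (Fin n) → ℝ := fun σ => (kendallDist σ σ₀ : ℝ)
    let Y : Equiv.Perm (Fin n) → ℝ :=
      fun σ => (kendallDist (antithetic n k σ) σ₀ : ℝ)
    E (fun σ => h (X σ) * h (Y σ)) - E (fun σ => h (X σ)) * E (fun σ => h (Y σ)) ≤ 0 := by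
  classical
  intro R E X Y
  have hXY : ∀ σ ∈ R, X σ + Y σ =
      ((Finset.univ.filter (fun p : Fin n × Fin n =>
        p.1 < p.2 ∧ (¬∃ i, a i = p.1) ∧ (¬∃ i, a i = p.2))).card : ℝ) := by
    intro σ hσ
    have := key_sum hk a σ σ₀ hσ hσ₀
    show ((kendallDist σ σ₀ : ℝ)) + ((kendallDist (antithetic n k σ) σ₀ : ℝ)) = _
    exact_mod_cast this
  have hanti : AntivaryOn (fun σ => h (X σ)) (fun σ => h (Y σ)) ↑R := by
    intro σi hσi σj hσj hlt
    have hY : Y σi < Y σj := by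
      by_contra hc
      push_neg at hc
      exact absurd hlt (not_lt.mpr (hmono hc))
    have e1 := hXY σi (Finset.mem_coe.mp hσi)
    have e2 := hXY σj (Finset.mem_coe.mp hσj)
    have hX : X σj ≤ X σi := by linarith
    exact hmono hX
  have cheb := hanti.card_mul_sum_le_sum_mul_sum
  have hN : (0 : ℝ) < (R.card : ℝ) := by
    exact_mod_cast Finset.card_pos.mpr ⟨σ₀, hσ₀⟩
  show (∑ σ ∈ R, h (X σ) * h (Y σ)) / (R.card : ℝ)
      - ((∑ σ ∈ R, h (X σ)) / (R.card : ℝ)) * ((∑ σ ∈ R, h (Y σ)) / (R.card : ℝ)) ≤ 0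
  rw [sub_nonpos, div_mul_div_comm, div_le_div_iff₀ hN (by positivity)]
  nlinarith [cheb, hN]
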